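/- Let α ≥ 1 be real, a > 0, Q ≥ 1 an integer, m ≥ 1, δ = 1/((2m−1)Q), and T = 2aQ·(2(2m−1)Q)^α. Then for any positive integer aᵢ, the battery bᵢ = T·(aᵢδ/2)^α + a satisfies bᵢ ≤ T·(aᵢδ/2)^α · ((2Q+1)/(2Q))^α, and hence (bᵢ/T)^(1/α) ≤ (aᵢδ/2)·((2Q+1)/(2Q)). -/

import Mathlib

theorem battery_radius_bound (Q m : ℕ) (hQ : 1 ≤ Q) (hm : 1 ≤ m)
    (α a : ℝ) (hα : 1 ≤ α) (ha : 0 < a)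
    (δ T : ℝ) (hδ : δ = 1 / ((2*(m:ℝ)-1)*(Q:ℝ)))
    (hT : T = 2*a*(Q:ℝ) * (2*(2*(m:ℝ)-1)*(Q:ℝ)) ^ α)
    (k : ℕ) (hk : 0 < k) (b : ℝ) (hb : b = T * ((k:ℝ)*δ/2) ^ α + a) :
    b ≤ T * ((k:ℝ)*δ/2) ^ α * ((2*(Q:ℝ)+1)/(2*(Q:ℝ))) ^ α ∧
    (b/T) ^ (1/α) ≤ ((k:ℝ)*δ/2) * ((2*(Q:ℝ)+1)/(2*(Q:ℝ))) := by
  have hQ1 : (1:ℝ) ≤ (Q:ℝ) := by exact_mod_cast hQ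
  have hQ0 : (0:ℝ) < (Q:ℝ) := by linarith
  have hm1 : (1:ℝ) ≤ (m:ℝ) := by exact_mod_cast hm
  have hM : (0:ℝ) < (2*(m:ℝ)-1)*(Q:ℝ) := by nlinarith
  have hk1 : (1:ℝ) ≤ (k:ℝ) := by exact_mod_cast hk
  have hα0 : (0:ℝ) < α := by linarith
  -- the base x = k*δ/2
  set x : ℝ := (k:ℝ)*δ/2 with hx
  have h2M : (0:ℝ) < 2*(2*(m:ℝ)-1)*(Q:ℝ) := by nlinarith
  have hδ0 : 0 < δ := by rw [hδ]; exact one_div_pos.mpr hM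
  have hx0 : 0 < x := by
    rw [hx]; exact div_pos (mul_pos (by linarith) hδ0) two_pos
  have hT0 : 0 < T := by
    rw [hT]; exact mul_pos (by positivity) (Real.rpow_pos_of_pos h2M α)
  -- key: T * x^α = 2*a*Q * k^α
  have hkey : T * x ^ α = 2*a*(Q:ℝ) * (k:ℝ) ^ α := by
    have hx' : x = (k:ℝ) / (2*(2*(m:ℝ)-1)*(Q:ℝ)) := by
      rw [hx, hδ]; field_simp [hM.ne']
    rw [hT, hx', Real.div_rpow (by positivity) h2M.le]
    field_simp [(Real.rpow_pos_of_pos h2M α).ne']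
    ring_nf
    exact mul_inv_cancel₀ (by convert (Real.rpow_pos_of_pos h2M α).ne' using 2; ring)
  -- Bernoulli
  have hr : 1 + 1/(2*(Q:ℝ)) ≤ ((2*(Q:ℝ)+1)/(2*(Q:ℝ))) ^ α := by
    have h1 : (2*(Q:ℝ)+1)/(2*(Q:ℝ)) = 1 + 1/(2*(Q:ℝ)) := by field_simp
    rw [h1]
    have hs : (-1:ℝ) ≤ 1/(2*(Q:ℝ)) := by
      have : (0:ℝ) ≤ 1/(2*(Q:ℝ)) := by positivity
      linarith
    have := one_add_mul_self_le_rpow_one_add hs hα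
    calc 1 + 1/(2*(Q:ℝ)) ≤ 1 + α * (1/(2*(Q:ℝ))) := by
          have : 1 * (1/(2*(Q:ℝ))) ≤ α * (1/(2*(Q:ℝ))) := by
            apply mul_le_mul_of_nonneg_right hα (by positivity)
          linarith
      _ ≤ (1 + 1/(2*(Q:ℝ))) ^ α := this
  have hkα : (1:ℝ) ≤ (k:ℝ) ^ α := Real.one_le_rpow hk1 hα0.le
  have h1 : b ≤ T * x ^ α * ((2*(Q:ℝ)+1)/(2*(Q:ℝ))) ^ α := by
    rw [hb, hkey]
    have h2 : 2*a*(Q:ℝ) * (k:ℝ) ^ α * (1 + 1/(2*(Q:ℝ))) ≤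
        2*a*(Q:ℝ) * (k:ℝ) ^ α * ((2*(Q:ℝ)+1)/(2*(Q:ℝ))) ^ α := by
      apply mul_le_mul_of_nonneg_left hr (by positivity)
    have h3 : 2*a*(Q:ℝ) * (k:ℝ) ^ α * (1 + 1/(2*(Q:ℝ))) =
        2*a*(Q:ℝ) * (k:ℝ) ^ α + a * (k:ℝ) ^ α := by field_simp
    nlinarith
  refine ⟨h1, ?_⟩
  have hb0 : 0 ≤ b / T := by
    rw [hb]; positivity
  have hβ : b / T ≤ (x * ((2*(Q:ℝ)+1)/(2*(Q:ℝ)))) ^ α := by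
    rw [Real.mul_rpow hx0.le (by positivity), div_le_iff₀ hT0]
    calc b ≤ T * x ^ α * ((2*(Q:ℝ)+1)/(2*(Q:ℝ))) ^ α := h1
      _ = x ^ α * ((2*(Q:ℝ)+1)/(2*(Q:ℝ))) ^ α * T := by ring
  calc (b/T) ^ (1/α) ≤ ((x * ((2*(Q:ℝ)+1)/(2*(Q:ℝ)))) ^ α) ^ (1/α) :=
        Real.rpow_le_rpow hb0 hβ (by positivity)
    _ = x * ((2*(Q:ℝ)+1)/(2*(Q:ℝ))) := by
        rw [one_div, Real.rpow_rpow_inv (by positivity) hα0.ne']
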